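/- If q is a trap state (g*(q) = 0 at the fixed point of the backward-marking algorithm), then no run of the automaton starting from q contains any accepting transition; in particular no run through q is accepting. -/

import Mathlib

/-- If `q` is a trap state (marked `false` by the backward-marking fixed
point), then no run starting from `q` contains an accepting transition. -/
theorem trap_state_no_accepting_run
    {Q Sig : Type*} [Fintype Q] (δ : Q → Sig → Set Q)
    (F : Set (Q × Sig × Q))
    (T : (Q → Bool) → (Q → Bool))
    (hT : ∀ g q, T g q = true ↔
      (g q = true ∨ ∃ σ, ∃ q' ∈ δ q σ, g q' = true))
    (g₀ : Q → Bool)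
    (hg₀ : ∀ q, g₀ q = true ↔ ∃ σ, ∃ q' ∈ δ q σ, (q, σ, q') ∈ F)
    (q : Q)
    (htrap : (T^[Fintype.card Q] g₀) q = false)
    (run : ℕ → Q) (σs : ℕ → Sig)
    (hrun0 : run 0 = q)
    (hrun : ∀ k, run (k + 1) ∈ δ (run k) (σs k)) :
    ∀ k, (run k, σs k, run (k + 1)) ∉ F := by
  classical
  set N := Fintype.card Q with hN
  set g := T^[N] g₀ with hg
  -- T is inflationary and monotone
  have hinfl : ∀ h : Q → Bool, ∀ p, h p = true → T h p = true := by
    intro h p hp; exact (hT h p).mpr (Or.inl hp)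
  have hmono : ∀ h₁ h₂ : Q → Bool, (∀ p, h₁ p = true → h₂ p = true) →
      ∀ p, T h₁ p = true → T h₂ p = true := by
    intro h₁ h₂ hle p hp
    rcases (hT h₁ p).mp hp with h | ⟨σ, q', hq', hgt⟩
    · exact (hT h₂ p).mpr (Or.inl (hle p h))
    · exact (hT h₂ p).mpr (Or.inr ⟨σ, q', hq', hle q' hgt⟩)
  -- chain is increasing
  have hstep : ∀ n, ∀ p, T^[n] g₀ p = true → T^[n+1] g₀ p = true := by
    intro n
    induction n with
    | zero => intro p hp; exact hinfl g₀ p hp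
    | succ m ih =>
        intro p hp
        rw [Function.iterate_succ_apply'] at hp ⊢
        exact hmono _ _ ih p hp
  have hchain : ∀ m n, m ≤ n → ∀ p, T^[m] g₀ p = true → T^[n] g₀ p = true := by
    intro m n hmn
    induction n, hmn using Nat.le_induction with
    | base => intro p hp; exact hp
    | succ n _ ih => intro p hp; exact hstep n p (ih p hp)
  -- true-sets
  set S : ℕ → Finset Q := fun n => Finset.univ.filter (fun p => T^[n] g₀ p = true)
    with hS
  have hSeq : ∀ n, S n = S (n+1) → T^[n] g₀ = T^[n+1] g₀ := by
    intro n h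
    funext p
    by_cases hp : T^[n] g₀ p = true
    · rw [hp, hstep n p hp]
    · by_cases hp' : T^[n+1] g₀ p = true
      · exfalso
        have : p ∈ S (n+1) := by
          simp only [hS, Finset.mem_filter, Finset.mem_univ, true_and]
          exact hp'
        rw [← h] at this
        simp only [hS, Finset.mem_filter, Finset.mem_univ, true_and] at this
        exact hp this
      · rw [Bool.not_eq_true] at hp hp'
        rw [hp, hp']
  -- pigeonhole: some step stabilizes within N steps
  have hcard : ∀ n, (∀ m < n, S m ≠ S (m+1)) → n ≤ (S n).card := by
    intro n
    induction n with
    | zero => intro _; exact Nat.zero_le _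
    | succ m ih =>
        intro h
        have h1 : m ≤ (S m).card := ih (fun k hk => h k (Nat.lt_succ_of_lt hk))
        have hsub : S m ⊆ S (m+1) := by
          intro p hp
          simp only [hS, Finset.mem_filter, Finset.mem_univ, true_and] at hp ⊢
          exact hstep m p hp
        have hne : S m ≠ S (m+1) := h m (Nat.lt_succ_self m)
        have : (S m).card < (S (m+1)).card :=
          Finset.card_lt_card (lt_of_le_of_ne hsub hne)
        omega
  have hexists : ∃ n ≤ N, S n = S (n+1) := by
    by_contra hcon
    push_neg at hcon
    have := hcard (N+1) (fun m hm => hcon m (by omega))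
    have hle : (S (N+1)).card ≤ N := by
      simpa [hN] using Finset.card_le_univ (S (N+1))
    omega
  obtain ⟨n, hnN, hSn⟩ := hexists
  have hfixn : T^[n] g₀ = T^[n+1] g₀ := hSeq n hSn
  have hconst : ∀ m, n ≤ m → T^[m] g₀ = T^[n] g₀ := by
    intro m hm
    induction m, hm using Nat.le_induction with
    | base => rfl
    | succ m _ ih =>
        rw [Function.iterate_succ_apply', ih, ← Function.iterate_succ_apply' T n g₀]
        exact hfixn.symm
  have hgfix : T g = g := by
    have h1 : g = T^[n] g₀ := hconst N hnN
    have h2 : T^[n+1] g₀ = T^[n] g₀ := hfixn.symm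
    rw [h1, ← Function.iterate_succ_apply' T n g₀]
    exact hfixn.symm
  -- falseness propagates along the run
  have hfalse : ∀ k, g (run k) = false := by
    intro k
    induction k with
    | zero => rw [hrun0]; exact htrap
    | succ m ih =>
        by_contra hcon
        have htrue : g (run (m+1)) = true := by
          cases h : g (run (m+1)) with
          | false => exact absurd h hcon
          | true => rfl
        have : T g (run m) = true :=
          (hT g (run m)).mpr (Or.inr ⟨σs m, run (m+1), hrun m, htrue⟩)
        rw [hgfix] at this
        rw [ih] at this
        exact Bool.false_ne_true this
  intro k hF
  have h0 : g₀ (run k) = true := (hg₀ (run k)).mpr ⟨σs k, run (k+1), hrun k, hF⟩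
  have : g (run k) = true := hchain 0 N (Nat.zero_le N) (run k) h0
  rw [hfalse k] at this
  exact Bool.false_ne_true this
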